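/- Let n ≥ 3 and let r be a complex number. The determinant of the (n−2)×(n−2) matrix whose (p, q) entry (1 ≤ p, q ≤ n−2) equals C(n−1, n−2q+p−1)·r^{n−2q+p−1} when n−2q+p−1 ≥ 0 (with the binomial coefficient C(n−1, m) equal to 0 when m > n−1) and equals 0 when n−2q+p−1 < 0, is equal to (2r)^{(n−1)(n−2)/2}. -/

import Mathlib

open Matrix Finset Polynomial

namespace DetBinomAux

/-! Auxiliary definitions: `ent r μ d` is the coefficient of `x^d` in `(r+x)^μ`
(`C(μ,d) r^(μ-d)` for `0 ≤ d ≤ μ`, else `0`); `pc r s i = C(i,s)(-r)^(i-s)` for `s ≤ i`. -/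

def ent (r : ℂ) (μ : ℕ) (d : ℤ) : ℂ :=
  if 0 ≤ d ∧ d ≤ μ then (μ.choose d.toNat : ℂ) * r ^ (μ - d.toNat) else 0

def pc (r : ℂ) (s i : ℕ) : ℂ :=
  if s ≤ i then (i.choose s : ℂ) * (-r) ^ (i - s) else 0

lemma ent_pascal (r : ℂ) {μ : ℕ} (hμ : 1 ≤ μ) (d : ℤ) :
    ent r μ d = r * ent r (μ - 1) d + ent r (μ - 1) (d - 1) := by
  obtain ⟨ν, rfl⟩ : ∃ ν, μ = ν + 1 := ⟨μ - 1, by omega⟩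
  simp only [ent, Nat.add_sub_cancel]
  rcases lt_trichotomy d 0 with hd | hd | hd
  · rw [if_neg (by omega), if_neg (by omega), if_neg (by omega)]; ring
  · subst hd
    rw [if_pos (by constructor <;> omega), if_pos (by constructor <;> omega),
      if_neg (by omega)]
    simp only [Int.toNat_zero, Nat.choose_zero_right, Nat.cast_one, one_mul, Nat.sub_zero,
      add_zero, pow_succ]
    ring
  · by_cases h1 : d ≤ ν
    · rw [if_pos ⟨by omega, by push_cast; omega⟩, if_pos ⟨by omega, by push_cast; omega⟩,
        if_pos ⟨by omega, by push_cast; omega⟩]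
      obtain ⟨j, hj⟩ : ∃ j, d.toNat = j + 1 := ⟨d.toNat - 1, by omega⟩
      rw [hj]
      have h1n : (d - 1).toNat = j := by omega
      rw [h1n, Nat.choose_succ_succ (ν) j]
      have e1 : ν + 1 - (j + 1) = ν - j := by omega
      have e2 : ν - (j + 1) + 1 = ν - j := by omega
      rw [e1]
      push_cast
      rw [← e2, pow_succ]
      ring
    · by_cases h2 : d ≤ ν + 1
      · have hd1 : d = (ν : ℤ) + 1 := by omega
        subst hd1
        rw [if_pos ⟨by omega, by push_cast; omega⟩, if_neg (by push_cast; omega),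
          if_pos ⟨by omega, by push_cast; omega⟩]
        have e1 : ((ν:ℤ) + 1 - 1).toNat = ν := by omega
        have e2 : ((ν:ℤ) + 1).toNat = ν + 1 := by omega
        rw [e1, e2]
        simp [Nat.choose_self]
      · rw [if_neg (by push_cast; omega), if_neg (by push_cast; omega),
          if_neg (by push_cast; omega)]
        ring

lemma pc_succ (r : ℂ) (s i : ℕ) :
    r * pc r (s + 1) i + pc r (s + 1) (i + 1) = pc r s i := by
  simp only [pc]
  by_cases h : s + 1 ≤ i
  · rw [if_pos h, if_pos (by omega), if_pos (by omega)]
    have e1 : i + 1 - (s + 1) = i - s := by omega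
    have e2 : i - (s + 1) + 1 = i - s := by omega
    rw [e1, Nat.choose_succ_succ i s]
    push_cast
    rw [← e2, pow_succ]
    ring
  · by_cases h2 : s ≤ i
    · have : s = i := by omega
      subst this
      rw [if_neg h, if_pos (by omega), if_pos (by omega)]
      simp [Nat.choose_succ_self_right, Nat.choose_self]
    · rw [if_neg h, if_neg (by omega), if_neg (by omega)]
      ring

lemma pc_zero_rec (r : ℂ) (i : ℕ) : r * pc r 0 i + pc r 0 (i + 1) = 0 := by
  simp only [pc, Nat.zero_le, if_pos, Nat.choose_zero_right, Nat.cast_one, one_mul,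
    Nat.sub_zero, pow_succ]
  ring

lemma ent_zero (r : ℂ) (d : ℤ) : ent r 0 d = if d = 0 then 1 else 0 := by
  simp only [ent]
  by_cases h : d = 0
  · subst h; simp
  · rw [if_neg (by omega), if_neg h]

/-! The phase-1 family `Fm` and phase-2 family `Hm`, with explicit sizes. -/

def Fm (r : ℂ) (m k N : ℕ) : Matrix (Fin N) (Fin N) ℂ :=
  Matrix.of fun i c =>
    if (c : ℕ) < m then ent r (m - k) ((2 * (c : ℕ) + 1 : ℤ) - (i : ℕ))
    else pc r ((c : ℕ) - m) (i : ℕ)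

lemma Fm_size_congr (r : ℂ) (m k : ℕ) {N N' : ℕ} (h : N = N') :
    (Fm r m k N).det = (Fm r m k N').det := by subst h; rfl

def hrow (l i : ℕ) : ℕ := if i < l then 2 * i else i + l

def Hm (r : ℂ) (m l N : ℕ) : Matrix (Fin N) (Fin N) ℂ :=
  Matrix.of fun i c =>
    if (c : ℕ) < m - l then ent r 0 ((2 * ((c : ℕ) + l) + 1 : ℤ) - hrow l (i : ℕ))
    else pc r ((c : ℕ) - (m - l)) (hrow l (i : ℕ))

lemma Hm_size_congr (r : ℂ) (m l : ℕ) {N N' : ℕ} (h : N = N') :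
    (Hm r m l N).det = (Hm r m l N').det := by subst h; rfl

def Bh (r : ℂ) (N : ℕ) : Matrix (Fin (N + 1)) (Fin (N + 1)) ℂ :=
  Matrix.of fun i j =>
    if (i : ℕ) = N then (if (j : ℕ) = 0 then 1 else 0)
    else if (j : ℕ) = (i : ℕ) then r else if (j : ℕ) = (i : ℕ) + 1 then 1 else 0

lemma det_Bh (r : ℂ) (N : ℕ) : (Bh r N).det = (-1) ^ N := by
  rw [det_succ_row (Bh r N) (Fin.last N)]
  have hlast : ∀ j : Fin (N + 1), Bh r N (Fin.last N) j = if (j : ℕ) = 0 then 1 else 0 := by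
    intro j; simp [Bh]
  rw [Finset.sum_eq_single (0 : Fin (N + 1))]
  · rw [hlast 0]
    have hminor : Matrix.det ((Bh r N).submatrix (Fin.last N).succAbove
        (0 : Fin (N+1)).succAbove) = 1 := by
      have hent : ∀ i j : Fin N,
          (Bh r N).submatrix (Fin.last N).succAbove (0 : Fin (N+1)).succAbove i j
          = if (j : ℕ) + 1 = (i : ℕ) then r else if (j : ℕ) = (i : ℕ) then 1 else 0 := by
        intro i j
        simp only [Matrix.submatrix_apply, Fin.succAbove_last, Fin.succAbove_zero, Bh, of_apply,
          Fin.coe_castSucc, Fin.val_succ]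
        rw [if_neg (by omega)]
        by_cases h1 : (j : ℕ) + 1 = (i : ℕ)
        · rw [if_pos h1, if_pos h1]
        · rw [if_neg h1, if_neg h1]
          by_cases h2 : (j : ℕ) = (i : ℕ)
          · rw [if_pos (by omega), if_pos h2]
          · rw [if_neg (by omega), if_neg h2]
      rw [Matrix.det_of_lowerTriangular]
      · apply Finset.prod_eq_one
        intro i _
        rw [hent i i, if_neg (by omega), if_pos rfl]
      · intro i j hij
        have hij' : (i : ℕ) < (j : ℕ) := hij
        rw [hent i j, if_neg (by omega), if_neg (by omega)]
    rw [hminor]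
    simp [Fin.val_last]
  · intro b _ hb
    rw [hlast b, if_neg (fun h => hb (Fin.ext (by rw [h, Fin.val_zero])))]
    ring
  · simp

lemma sum_collapse_one {N : ℕ} (a : ℕ) (ha : a < N) (x : ℂ) (g : Fin N → ℂ) :
    (∑ j : Fin N, (if (j : ℕ) = a then x else 0) * g j) = x * g ⟨a, ha⟩ := by
  rw [Finset.sum_eq_single (⟨a, ha⟩ : Fin N)]
  · simp
  · intro b _ hb
    rw [if_neg (fun h => hb (Fin.ext h)), zero_mul]
  · simp

lemma sum_collapse_two {N : ℕ} (a : ℕ) (ha : a + 1 < N) (x y : ℂ) (g : Fin N → ℂ) :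
    (∑ j : Fin N, (if (j : ℕ) = a then x else if (j : ℕ) = a + 1 then y else 0) * g j)
      = x * g ⟨a, by omega⟩ + y * g ⟨a + 1, ha⟩ := by
  have key : ∀ j : Fin N,
      (if (j : ℕ) = a then x else if (j : ℕ) = a + 1 then y else 0) * g j
      = (if (j : ℕ) = a then x else 0) * g j + (if (j : ℕ) = a + 1 then y else 0) * g j := by
    intro j
    by_cases h1 : (j : ℕ) = a
    · rw [if_pos h1, if_pos h1, if_neg (by omega)]; ring
    · rw [if_neg h1, if_neg h1]
      by_cases h2 : (j : ℕ) = a + 1 <;> simp [h2]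
  rw [Finset.sum_congr rfl (fun j _ => key j), Finset.sum_add_distrib,
    sum_collapse_one a (by omega) x g, sum_collapse_one (a+1) ha y g]

/-- the product matrix `Bh * Fm (k+1)` -/
def Cm (r : ℂ) (m k : ℕ) : Matrix (Fin (m + k + 1)) (Fin (m + k + 1)) ℂ :=
  Matrix.of fun i c =>
    if (i : ℕ) = m + k then Fm r m (k + 1) (m + k + 1) ⟨0, by omega⟩ c
    else if (c : ℕ) < m then ent r (m - k) ((2 * (c : ℕ) + 1 : ℤ) - (i : ℕ))
    else if (c : ℕ) = m then 0
    else pc r ((c : ℕ) - m - 1) (i : ℕ)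

lemma hprod (r : ℂ) (m k : ℕ) (hk : k < m) :
    Bh r (m + k) * Fm r m (k + 1) (m + k + 1) = Cm r m k := by
  ext i c
  rw [Matrix.mul_apply]
  by_cases hi : (i : ℕ) = m + k
  · have hB : ∀ j : Fin (m + k + 1), Bh r (m + k) i j = if (j : ℕ) = 0 then 1 else 0 := by
      intro j; simp [Bh, hi]
    calc (∑ j, Bh r (m + k) i j * Fm r m (k + 1) (m + k + 1) j c)
        = ∑ j : Fin (m + k + 1), (if (j : ℕ) = 0 then (1:ℂ) else 0)
            * Fm r m (k + 1) (m + k + 1) j c := by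
          refine Finset.sum_congr rfl fun j _ => ?_; rw [hB j]
      _ = 1 * Fm r m (k + 1) (m + k + 1) ⟨0, by omega⟩ c := sum_collapse_one 0 (by omega) 1 _
      _ = Cm r m k i c := by
          rw [one_mul, Cm, Matrix.of_apply, if_pos hi]
  · have hB : ∀ j : Fin (m + k + 1), Bh r (m + k) i j =
        if (j : ℕ) = (i:ℕ) then r else if (j : ℕ) = (i:ℕ) + 1 then 1 else 0 := by
      intro j; simp [Bh, hi]
    calc (∑ j, Bh r (m + k) i j * Fm r m (k + 1) (m + k + 1) j c)
        = ∑ j : Fin (m + k + 1), (if (j : ℕ) = (i:ℕ) then r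
            else if (j : ℕ) = (i:ℕ) + 1 then (1:ℂ) else 0)
            * Fm r m (k + 1) (m + k + 1) j c := by
          refine Finset.sum_congr rfl fun j _ => ?_; rw [hB j]
      _ = r * Fm r m (k + 1) (m + k + 1) ⟨(i:ℕ), by omega⟩ c
            + 1 * Fm r m (k + 1) (m + k + 1) ⟨(i:ℕ)+1, by omega⟩ c :=
          sum_collapse_two (i:ℕ) (by omega) r 1 _
      _ = Cm r m k i c := by
          rw [one_mul, Cm, Matrix.of_apply, if_neg hi]
          simp only [Fm, Matrix.of_apply]
          by_cases hc : (c : ℕ) < m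
          · rw [if_pos hc, if_pos hc, if_pos hc]
            rw [ent_pascal r (by omega : 1 ≤ m - k) ((2 * (c : ℕ) + 1 : ℤ) - (i : ℕ))]
            have e1 : m - k - 1 = m - (k + 1) := by omega
            have e2 : ((2 * (c : ℕ) + 1 : ℤ) - (i : ℕ)) - 1
                = (2 * (c : ℕ) + 1 : ℤ) - (((i : ℕ) + 1 : ℕ) : ℤ) := by push_cast; ring
            rw [e1, e2]
          · rw [if_neg hc, if_neg hc, if_neg hc]
            by_cases hcm : (c : ℕ) = m
            · rw [if_pos hcm, hcm]
              have e : m - m = 0 := by omega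
              rw [e]
              exact pc_zero_rec r (i:ℕ)
            · rw [if_neg hcm]
              have e3 : (c:ℕ) - m = ((c:ℕ) - m - 1) + 1 := by omega
              rw [e3]
              exact pc_succ r ((c:ℕ) - m - 1) (i:ℕ)

lemma hcol (r : ℂ) (m k : ℕ) :
    (Cm r m k).det = (-1) ^ (m + k + m) * (Fm r m k (m + k)).det := by
  have hm1 : m < m + k + 1 := by omega
  rw [det_succ_column (Cm r m k) ⟨m, hm1⟩]
  rw [Finset.sum_eq_single (Fin.last (m + k))]
  · have hentry : Cm r m k (Fin.last (m + k)) ⟨m, hm1⟩ = 1 := by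
      have hmv : ((⟨m, hm1⟩ : Fin (m + k + 1)) : ℕ) = m := rfl
      rw [Cm, Matrix.of_apply, if_pos (by rfl : ((Fin.last (m+k)) : ℕ) = m + k)]
      simp only [Fm, Matrix.of_apply, hmv]
      rw [if_neg (by omega)]
      have e : m - m = 0 := by omega
      rw [e]
      simp [pc]
    rw [hentry]
    have hsub : (Cm r m k).submatrix (Fin.last (m + k)).succAbove
        (⟨m, hm1⟩ : Fin (m + k + 1)).succAbove = Fm r m k (m + k) := by
      ext i c
      simp only [Matrix.submatrix_apply, Fin.succAbove_last]
      have hrowne : ((Fin.castSucc i : Fin (m + k + 1)) : ℕ) ≠ m + k := by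
        simp only [Fin.coe_castSucc]; omega
      by_cases hc : (c : ℕ) < m
      · have hcl : ((⟨m, hm1⟩ : Fin (m + k + 1)).succAbove c) = Fin.castSucc c := by
          apply Fin.succAbove_of_castSucc_lt
          rw [Fin.lt_def]; simpa [Fin.coe_castSucc] using hc
        rw [hcl, Cm, Matrix.of_apply]
        rw [if_neg hrowne]
        simp only [Fin.coe_castSucc]
        rw [if_pos hc]
        simp only [Fm, Matrix.of_apply]
        rw [if_pos hc]
      · have hcl : ((⟨m, hm1⟩ : Fin (m + k + 1)).succAbove c) = c.succ := by
          apply Fin.succAbove_of_le_castSucc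
          rw [Fin.le_def]; simp only [Fin.coe_castSucc]; omega
        rw [hcl, Cm, Matrix.of_apply]
        rw [if_neg hrowne]
        simp only [Fin.val_succ, Fin.coe_castSucc]
        rw [if_neg (by omega), if_neg (by omega)]
        simp only [Fm, Matrix.of_apply]
        rw [if_neg hc]
        congr 1
        omega
    rw [hsub]
    norm_num [Fin.val_last]
  · intro b _ hb
    have hbv : (b : ℕ) ≠ m + k := by
      intro h; exact hb (by ext; rw [h]; rfl)
    have hz : Cm r m k b ⟨m, hm1⟩ = 0 := by
      have hmv : ((⟨m, hm1⟩ : Fin (m + k + 1)) : ℕ) = m := rfl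
      rw [Cm, Matrix.of_apply, if_neg hbv, hmv, if_neg (by omega), if_pos rfl]
    rw [hz]
    ring
  · simp

lemma step1 (r : ℂ) (m k : ℕ) (hk : k < m) :
    (Fm r m k (m + k)).det = (-1) ^ m * (Fm r m (k + 1) (m + k + 1)).det := by
  have hdet : ((-1:ℂ)) ^ (m + k) * (Fm r m (k + 1) (m + k + 1)).det
      = (-1) ^ (m + k + m) * (Fm r m k (m + k)).det := by
    rw [← det_Bh r (m + k), ← Matrix.det_mul, hprod r m k hk, hcol r m k]
  rw [pow_add ((-1:ℂ)) (m + k) m, mul_assoc] at hdet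
  have hne : ((-1:ℂ)) ^ (m + k) ≠ 0 := pow_ne_zero _ (by norm_num)
  have h4 : (Fm r m (k + 1) (m + k + 1)).det = (-1) ^ m * (Fm r m k (m + k)).det :=
    mul_left_cancel₀ hne hdet
  rw [h4, ← mul_assoc, ← pow_add, Even.neg_one_pow ⟨m, rfl⟩, one_mul]

lemma phase1 (r : ℂ) (m : ℕ) : ∀ k, k ≤ m →
    (Fm r m 0 m).det = (-1) ^ (m * k) * (Fm r m k (m + k)).det := by
  intro k
  induction k with
  | zero => intro _; simp
  | succ k ih =>
    intro hk
    rw [ih (by omega), step1 r m k (by omega), ← mul_assoc, ← pow_add,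
      Nat.mul_succ]
    rfl

lemma bridge (r : ℂ) (m N : ℕ) : Fm r m m N = Hm r m 0 N := by
  ext i c
  simp only [Fm, Hm, Matrix.of_apply, hrow, Nat.sub_zero, Nat.sub_self]
  have h1 : ¬ ((i : ℕ) < 0) := by omega
  rw [if_neg h1]
  norm_num

lemma step2 (r : ℂ) (m l : ℕ) (hl : l < m) :
    (Hm r m l (2 * m - l - 1 + 1)).det
      = (-1) ^ (l + 1) * (Hm r m (l + 1) (2 * m - l - 1)).det := by
  set K := 2 * m - l - 1 with hK
  rw [det_succ_column_zero (Hm r m l (K + 1))]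
  rw [Finset.sum_eq_single (⟨l + 1, by omega⟩ : Fin (K + 1))]
  · have hentry : Hm r m l (K + 1) ⟨l + 1, by omega⟩ 0 = 1 := by
      simp only [Hm, Matrix.of_apply]
      rw [Fin.val_zero]
      rw [if_pos (by omega), hrow, if_neg (by omega), ent_zero]
      rw [if_pos (by push_cast; omega)]
    rw [hentry]
    have hsub : (Hm r m l (K + 1)).submatrix (⟨l + 1, by omega⟩ : Fin (K + 1)).succAbove
        Fin.succ = Hm r m (l + 1) K := by
      ext i c
      simp only [Matrix.submatrix_apply]
      by_cases hi : (i : ℕ) < l + 1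
      · have hr : ((⟨l + 1, by omega⟩ : Fin (K + 1)).succAbove i) = Fin.castSucc i := by
          apply Fin.succAbove_of_castSucc_lt
          rw [Fin.lt_def]; simpa [Fin.coe_castSucc] using hi
        rw [hr]
        simp only [Hm, Matrix.of_apply, Fin.coe_castSucc, Fin.val_succ]
        have hrw : hrow l (i : ℕ) = hrow (l + 1) (i : ℕ) := by
          simp only [hrow]
          by_cases h : (i : ℕ) < l
          · rw [if_pos h, if_pos (by omega)]
          · have : (i : ℕ) = l := by omega
            rw [if_neg h, if_pos (by omega), this]
            omega
        rw [hrw]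
        by_cases hc : (c : ℕ) + 1 < m - l
        · rw [if_pos hc, if_pos (by omega)]
          congr 2
          push_cast; ring
        · rw [if_neg hc, if_neg (by omega)]
          congr 1
          omega
      · have hr : ((⟨l + 1, by omega⟩ : Fin (K + 1)).succAbove i) = Fin.succ i := by
          apply Fin.succAbove_of_le_castSucc
          rw [Fin.le_def]; simp only [Fin.coe_castSucc]; omega
        rw [hr]
        simp only [Hm, Matrix.of_apply, Fin.val_succ]
        have hrw : hrow l ((i : ℕ) + 1) = hrow (l + 1) (i : ℕ) := by
          simp only [hrow]
          rw [if_neg (by omega), if_neg (by omega)]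
          omega
        rw [hrw]
        by_cases hc : (c : ℕ) + 1 < m - l
        · rw [if_pos hc, if_pos (by omega)]
          congr 2
          push_cast; ring
        · rw [if_neg hc, if_neg (by omega)]
          congr 1
          omega
    rw [hsub]
    norm_num
  · intro b _ hb
    have hz : Hm r m l (K + 1) b 0 = 0 := by
      simp only [Hm, Matrix.of_apply]
      rw [Fin.val_zero]
      rw [if_pos (by omega), ent_zero, if_neg]
      simp only [hrow]
      by_cases h : (b : ℕ) < l
      · push_cast; omega
      · have : (b : ℕ) ≠ l + 1 := by
          intro h2; exact hb (by ext; rw [h2])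
        push_cast; omega
    rw [hz]
    ring
  · simp

lemma phase2 (r : ℂ) (m : ℕ) : ∀ l, l ≤ m →
    (Hm r m 0 (2 * m)).det
      = (-1) ^ (∑ j ∈ Finset.range l, (j + 1)) * (Hm r m l (2 * m - l)).det := by
  intro l
  induction l with
  | zero => intro _; simp
  | succ l ih =>
    intro hl
    have h2 : (Hm r m l (2 * m - l)).det = (Hm r m l (2 * m - l - 1 + 1)).det :=
      Hm_size_congr r m l (by omega)
    rw [ih (by omega), h2, step2 r m l (by omega)]
    have h3 : 2 * m - l - 1 = 2 * m - (l + 1) := by omega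
    rw [h3, ← mul_assoc, ← pow_add, Finset.sum_range_succ]

/-- determinant of the binomial matrix `C(2t, s)` via Vandermonde -/
lemma detYp (M : ℕ) :
    (Matrix.of fun t s : Fin (M + 1) => ((2 * (t : ℕ)).choose (s : ℕ) : ℂ)).det
      = 2 ^ (∑ j ∈ Finset.range (M + 1), j) := by
  have hvdm := Matrix.det_eval_matrixOfPolynomials_eq_det_vandermonde
    (v := fun t : Fin (M + 1) => ((2 * (t : ℕ) : ℕ) : ℂ))
    (p := fun s : Fin (M + 1) => descPochhammer ℂ (s : ℕ))
    (fun s => descPochhammer_natDegree (R := ℂ) _)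
    (fun s => monic_descPochhammer _ _)
  have heval : (Matrix.of fun t s : Fin (M + 1) =>
      ((descPochhammer ℂ (s : ℕ)).eval ((2 * (t : ℕ) : ℕ) : ℂ)))
      = (Matrix.of fun t s : Fin (M + 1) => ((2 * (t : ℕ)).choose (s : ℕ) : ℂ))
        * Matrix.diagonal (fun s : Fin (M + 1) => (((s : ℕ).factorial : ℕ) : ℂ)) := by
    ext t s
    rw [Matrix.mul_diagonal, Matrix.of_apply, Matrix.of_apply,
      descPochhammer_eval_eq_descFactorial]
    rw [← Nat.cast_mul, Nat.descFactorial_eq_factorial_mul_choose]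
    push_cast
    ring
  have hvd2 : Matrix.vandermonde (fun t : Fin (M + 1) => ((2 * (t : ℕ) : ℕ) : ℂ))
      = Matrix.vandermonde (fun t : Fin (M + 1) => ((t : ℕ) : ℂ))
        * Matrix.diagonal (fun s : Fin (M + 1) => (2 : ℂ) ^ (s : ℕ)) := by
    ext t s
    rw [Matrix.mul_diagonal, Matrix.vandermonde_apply, Matrix.vandermonde_apply]
    push_cast
    rw [mul_pow]
    ring
  rw [hvd2, heval] at hvdm
  rw [Matrix.det_mul, Matrix.det_mul, Matrix.det_diagonal, Matrix.det_diagonal] at hvdm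
  have hsf : (Matrix.vandermonde (fun t : Fin (M + 1) => ((t : ℕ) : ℂ))).det
      = ((Nat.superFactorial M : ℕ) : ℂ) := by
    have := Matrix.det_vandermonde_id_eq_superFactorial (R := ℂ) M
    convert this using 2
  have hprodfact : (∏ s : Fin (M + 1), (((s : ℕ).factorial : ℕ) : ℂ))
      = ((Nat.superFactorial M : ℕ) : ℂ) := by
    rw [← Nat.cast_prod]
    congr 1
    rw [Fin.prod_univ_eq_prod_range (fun x => x.factorial) (M + 1)]
    exact Nat.prod_range_succ_factorial M
  have hprod2 : (∏ s : Fin (M + 1), (2 : ℂ) ^ (s : ℕ))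
      = 2 ^ (∑ j ∈ Finset.range (M + 1), j) := by
    rw [Finset.prod_pow_eq_pow_sum]
    congr 1
    exact Fin.sum_univ_eq_sum_range (fun x => x) (M + 1)
  rw [hsf, hprod2, hprodfact] at hvdm
  have hne : ((Nat.superFactorial M : ℕ) : ℂ) ≠ 0 := by
    rw [Nat.cast_ne_zero]
    have : 0 < Nat.superFactorial M := by
      rw [← Nat.prod_range_succ_factorial]
      exact Finset.prod_pos (fun i _ => Nat.factorial_pos i)
    omega
  have h2 : ((Nat.superFactorial M : ℕ) : ℂ) * (2 ^ (∑ j ∈ Finset.range (M + 1), j))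
      = ((Nat.superFactorial M : ℕ) : ℂ)
        * (Matrix.of fun t s : Fin (M + 1) => ((2 * (t : ℕ)).choose (s : ℕ) : ℂ)).det := by
    rw [hvdm]; ring
  exact (mul_left_cancel₀ hne h2).symm

lemma detY (r : ℂ) (hr : r ≠ 0) (M : ℕ) :
    (Hm r (M + 1) (M + 1) (M + 1)).det
      = (-1) ^ (∑ j ∈ Finset.range (M + 1), j) * 2 ^ (∑ j ∈ Finset.range (M + 1), j)
        * r ^ (∑ j ∈ Finset.range (M + 1), j) := by
  have hnr : (-r) ≠ 0 := neg_ne_zero.mpr hr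
  set K := ∑ j ∈ Finset.range (M + 1), j with hK
  have hfac : Hm r (M + 1) (M + 1) (M + 1)
      = Matrix.diagonal (fun t : Fin (M + 1) => (-r) ^ (2 * (t : ℕ)))
        * (Matrix.of fun t s : Fin (M + 1) => ((2 * (t : ℕ)).choose (s : ℕ) : ℂ))
        * Matrix.diagonal (fun s : Fin (M + 1) => ((-r)⁻¹) ^ (s : ℕ)) := by
    ext t s
    rw [Matrix.mul_diagonal, Matrix.mul_apply]
    simp only [Matrix.diagonal_apply, Matrix.of_apply]
    rw [Finset.sum_eq_single t]
    · rw [if_pos rfl]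
      simp only [Hm, Matrix.of_apply, hrow]
      rw [if_neg (by omega), if_pos (by omega : (t:ℕ) < M + 1)]
      have e : (s : ℕ) - (M + 1 - (M + 1)) = (s : ℕ) := by omega
      rw [e]
      simp only [pc]
      by_cases h : (s : ℕ) ≤ 2 * (t : ℕ)
      · rw [if_pos h, inv_pow]
        have h2 : ((-r) ^ (s:ℕ)) ≠ 0 := pow_ne_zero _ hnr
        have hp : (-r) ^ (2*(t:ℕ) - (s:ℕ)) * (-r) ^ (s:ℕ) = (-r) ^ (2*(t:ℕ)) := by
          rw [← pow_add]
          congr 1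
          omega
        field_simp
        rw [mul_assoc, hp, Even.neg_pow (even_two_mul _)]
      · rw [if_neg h, Nat.choose_eq_zero_of_lt (by omega)]
        push_cast
        ring
    · intro b _ hb
      rw [if_neg (Ne.symm hb)]
      ring
    · simp
  rw [hfac, Matrix.det_mul, Matrix.det_mul, detYp M, Matrix.det_diagonal, Matrix.det_diagonal]
  have h1 : (∏ t : Fin (M + 1), (-r) ^ (2 * (t : ℕ))) = (-r) ^ (2 * K) := by
    rw [Finset.prod_pow_eq_pow_sum]
    congr 1
    rw [hK, Finset.mul_sum]
    exact Fin.sum_univ_eq_sum_range (fun x => 2 * x) (M + 1)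
  have h2 : (∏ s : Fin (M + 1), ((-r)⁻¹) ^ (s : ℕ)) = ((-r)⁻¹) ^ K := by
    rw [Finset.prod_pow_eq_pow_sum]
    congr 1
    exact Fin.sum_univ_eq_sum_range (fun x => x) (M + 1)
  rw [h1, h2, inv_pow]
  have h3 : ((-r) ^ K) ≠ 0 := pow_ne_zero _ hnr
  have e1 : (-r) ^ (2 * K) = (-r) ^ K * (-r) ^ K := by rw [two_mul, pow_add]
  rw [e1, mul_right_comm ((-r) ^ K * (-r) ^ K) ((2:ℂ) ^ K) (((-r) ^ K)⁻¹),
    mul_assoc ((-r) ^ K) ((-r) ^ K) (((-r) ^ K)⁻¹), mul_inv_cancel₀ h3, mul_one,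
    neg_pow r K]
  ring

/-- expansion of the `(M+1)`-sized bordered matrix along its last column -/
lemma claim1 (r : ℂ) (M : ℕ) :
    (Fm r (M + 1) 0 (M + 1)).det
      = (Matrix.of fun p q : Fin M => ent r (M + 1) ((2 * (q : ℕ) + 1 : ℤ) - (p : ℕ))).det := by
  rw [det_succ_column (Fm r (M + 1) 0 (M + 1)) (Fin.last M)]
  rw [Finset.sum_eq_single (Fin.last M)]
  · have hentry : Fm r (M + 1) 0 (M + 1) (Fin.last M) (Fin.last M) = 1 := by
      simp only [Fm, Matrix.of_apply, Fin.val_last]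
      rw [if_pos (by omega)]
      simp only [ent, Nat.sub_zero]
      rw [if_pos (by constructor <;> push_cast <;> omega)]
      have e : ((2 * M + 1 : ℤ) - M).toNat = M + 1 := by omega
      rw [e, Nat.choose_self, Nat.sub_self]
      simp
    rw [hentry]
    have hsub : (Fm r (M + 1) 0 (M + 1)).submatrix (Fin.last M).succAbove (Fin.last M).succAbove
        = Matrix.of fun p q : Fin M => ent r (M + 1) ((2 * (q : ℕ) + 1 : ℤ) - (p : ℕ)) := by
      ext p q
      simp only [Matrix.submatrix_apply, Fin.succAbove_last, Fm, Matrix.of_apply,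
        Fin.coe_castSucc, Nat.sub_zero]
      rw [if_pos (by omega)]
    rw [hsub]
    simp [Fin.val_last]
  · intro b _ hb
    have hbv : (b : ℕ) ≠ M := by
      intro h; exact hb (by ext; rw [h]; rfl)
    have hz : Fm r (M + 1) 0 (M + 1) b (Fin.last M) = 0 := by
      simp only [Fm, Matrix.of_apply, Fin.val_last]
      rw [if_pos (by omega)]
      simp only [ent, Nat.sub_zero]
      rw [if_neg (by push_cast; omega)]
    rw [hz]
    ring
  · simp

/-- main computation, for `r ≠ 0` -/
lemma key (M : ℕ) (r : ℂ) (hr : r ≠ 0) :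
    (Matrix.of fun p q : Fin M => ent r (M + 1) ((2 * (q : ℕ) + 1 : ℤ) - (p : ℕ))).det
      = (2 * r) ^ ((M + 1) * M / 2) := by
  set m := M + 1 with hm
  set K := ∑ j ∈ Finset.range m, j with hK
  have c1 := claim1 r M
  have p1 := phase1 r m m le_rfl
  have br : (Fm r m m (m + m)).det = (Hm r m 0 (2 * m)).det := by
    rw [bridge r m (m + m)]
    exact Hm_size_congr r m 0 (by omega)
  have p2 := phase2 r m m le_rfl
  have hsz : (Hm r m m (2 * m - m)).det = (Hm r m m m).det := Hm_size_congr r m m (by omega)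
  have dy := detY r hr M
  have hE : (∑ j ∈ Finset.range m, (j + 1)) = K + m := by
    rw [hK, Finset.sum_add_distrib, Finset.sum_const, card_range, smul_eq_mul, mul_one]
  rw [← c1, p1, br, p2, hsz, dy, hE]
  have heven : Even (m * m + (K + m) + K) := by
    have h1 : m * m + (K + m) + K = m * (m + 1) + 2 * K := by ring
    rw [h1]
    exact (Nat.even_mul_succ_self m).add (even_two_mul K)
  have hsign : ((-1 : ℂ)) ^ (m * m) * ((-1) ^ (K + m) * ((-1) ^ K * 2 ^ K * r ^ K))
      = (2 * r) ^ K := by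
    calc ((-1 : ℂ)) ^ (m * m) * ((-1) ^ (K + m) * ((-1) ^ K * 2 ^ K * r ^ K))
        = ((-1 : ℂ)) ^ (m * m + (K + m) + K) * (2 ^ K * r ^ K) := by
          rw [pow_add, pow_add]; ring
      _ = 2 ^ K * r ^ K := by rw [heven.neg_one_pow, one_mul]
      _ = (2 * r) ^ K := (mul_pow 2 r K).symm
  rw [hsign]
  have hgauss : K * 2 = m * M := by
    rw [hK, Finset.sum_range_id_mul_two m]
    congr 1
  have hfin : K = m * M / 2 := by omega
  rw [hfin]

end DetBinomAux

/-- For `n ≥ 3` and `r : ℂ`, the determinant of the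
`(n-2) × (n-2)` matrix whose entry in (1-indexed) row `p`, column `q` is
`C(n-1, n-2q+p-1) * r^(n-2q+p-1)` when `n - 2q + p - 1 ≥ 0` and `0` otherwise
(with `C(n-1, m) = 0` for `m > n-1`), equals `(2r)^((n-1)(n-2)/2)`.
(Below `p q : Fin (n-2)` are 0-indexed, so the exponent is `n + p - 2q - 2`.) -/
theorem det_binomial_matrix_eq_two_mul_pow
    (n : ℕ) (hn : 3 ≤ n) (r : ℂ) :
    Matrix.det (Matrix.of fun p q : Fin (n - 2) =>
        if 2 * (q : ℕ) + 2 ≤ n + (p : ℕ) then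
          (Nat.choose (n - 1) (n + (p : ℕ) - (2 * (q : ℕ) + 2)) : ℂ) *
            r ^ (n + (p : ℕ) - (2 * (q : ℕ) + 2))
        else 0) =
      (2 * r) ^ ((n - 1) * (n - 2) / 2) := by
  by_cases hr : r = 0
  · subst hr
    have hK : 1 ≤ (n - 1) * (n - 2) / 2 := by
      have h1 : 2 ≤ n - 1 := by omega
      have h2 : 1 ≤ n - 2 := by omega
      have : 2 * 1 ≤ (n - 1) * (n - 2) := Nat.mul_le_mul h1 h2
      omega
    rw [mul_zero, zero_pow (by omega)]
    have hp0 : (n + 1) % 2 < n - 2 := by omega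
    apply Matrix.det_eq_zero_of_row_eq_zero (⟨(n + 1) % 2, hp0⟩ : Fin (n - 2))
    intro q
    simp only [Matrix.of_apply]
    by_cases hc : 2 * (q : ℕ) + 2 ≤ n + (n + 1) % 2
    · rw [if_pos hc]
      rw [zero_pow (by omega)]
      ring
    · rw [if_neg hc]
  · -- r ≠ 0 : translate entries to `ent` and use `key`
    have htrans : (Matrix.of fun p q : Fin (n - 2) =>
        if 2 * (q : ℕ) + 2 ≤ n + (p : ℕ) then
          (Nat.choose (n - 1) (n + (p : ℕ) - (2 * (q : ℕ) + 2)) : ℂ) *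
            r ^ (n + (p : ℕ) - (2 * (q : ℕ) + 2))
        else 0)
        = Matrix.of fun p q : Fin (n - 2) =>
            DetBinomAux.ent r ((n - 2) + 1) ((2 * (q : ℕ) + 1 : ℤ) - (p : ℕ)) := by
      ext p q
      simp only [Matrix.of_apply, DetBinomAux.ent]
      have hn1 : (n - 2) + 1 = n - 1 := by omega
      rw [hn1]
      by_cases hc : 2 * (q : ℕ) + 2 ≤ n + (p : ℕ)
      · rw [if_pos hc]
        by_cases hd : (p : ℕ) ≤ 2 * (q : ℕ) + 1
        · rw [if_pos (by constructor <;> push_cast <;> omega)]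
          have e1 : ((2 * (q : ℕ) + 1 : ℤ) - (p : ℕ)).toNat = 2 * (q : ℕ) + 1 - (p : ℕ) := by
            omega
          rw [e1]
          have e2 : n + (p : ℕ) - (2 * (q : ℕ) + 2) = (n - 1) - (2 * (q : ℕ) + 1 - (p : ℕ)) := by
            omega
          rw [e2, Nat.choose_symm (by omega)]
        · rw [if_neg (by push_cast; omega)]
          rw [Nat.choose_eq_zero_of_lt (by omega)]
          push_cast
          ring
      · rw [if_neg hc, if_neg (by push_cast; omega)]
    rw [htrans, DetBinomAux.key (n - 2) r hr]
    congr 1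
    have e : n - 2 + 1 = n - 1 := by omega
    rw [e]
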